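/- Suppose κ is a limit cardinal. Then there exists a connected graph whose vertex set has cardinality κ, whose chromatic number is κ, but such that the complete graph K_κ is not a minor of this graph. -/

import Mathlib

universe u

open Cardinal

def Colorable' {V : Type u} (G : SimpleGraph V) (μ : Cardinal.{u}) : Prop :=
  ∃ (β : Type u) (c : V → β), #β ≤ μ ∧ ∀ ⦃x y : V⦄, G.Adj x y → c x ≠ c y

def ChromaticEq {V : Type u} (G : SimpleGraph V) (μ : Cardinal.{u}) : Prop :=
  Colorable' G μ ∧ ∀ ν : Cardinal.{u}, ν < μ → ¬ Colorable' G ν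

def HasCompleteMinor {V : Type u} (G : SimpleGraph V) (κ : Cardinal.{u}) : Prop :=
  ∃ (ι : Type u) (U : ι → Set V), #ι = κ ∧
    (∀ i, (U i).Nonempty) ∧
    (∀ i j, i ≠ j → Disjoint (U i) (U j)) ∧
    (∀ i, (G.induce (U i)).Connected) ∧
    (∀ i j, i ≠ j → ∃ x ∈ U i, ∃ y ∈ U j, G.Adj x y)

def IsSetTree (T : Type u) [PartialOrder T] : Prop :=
  ∀ t : T, IsWellOrder {s : T // s < t} (· < ·)

def compGraph (T : Type u) [PartialOrder T] : SimpleGraph T :=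
  SimpleGraph.fromRel (· ≤ ·)

def IsSpecialTree (T : Type u) [PartialOrder T] (κ : Cardinal.{u}) : Prop :=
  ∃ (β : Type u) (f : T → β), #β ≤ κ ∧ ∀ ⦃s t : T⦄, s < t → f s ≠ f t

def HasChainOfSize (T : Type u) [PartialOrder T] (κ : Cardinal.{u}) : Prop :=
  ∃ C : Set T, IsChain (· ≤ ·) C ∧ #C = κ

def HasAntichainOfSize (T : Type u) [PartialOrder T] (κ : Cardinal.{u}) : Prop :=
  ∃ A : Set T, IsAntichain (· ≤ ·) A ∧ #A = κ

def HasIndepOfSize {V : Type u} (G : SimpleGraph V) (κ : Cardinal.{u}) : Prop :=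
  ∃ S : Set V, #S = κ ∧ ∀ x ∈ S, ∀ y ∈ S, ¬ G.Adj x y

def AllChainsCountable (T : Type u) [PartialOrder T] : Prop :=
  ∀ C : Set T, IsChain (· ≤ ·) C → #C ≤ ℵ₀

noncomputable def nodeHeight {T : Type u} [PartialOrder T] (hT : IsSetTree T) (t : T) : Ordinal.{u} :=
  @Ordinal.type {s : T // s < t} (· < ·) (hT t)

def KappaLambdaConnected {V : Type u} (G : SimpleGraph V) (κ μ : Cardinal.{u}) : Prop :=
  ∀ S : Set V, #S < κ → (Sᶜ : Set V).Nonempty ∧ #((G.induce (Sᶜ : Set V)).ConnectedComponent) < μ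

def KappaConnected {V : Type u} (G : SimpleGraph V) (κ : Cardinal.{u}) : Prop :=
  κ ≤ #V ∧ ∀ S : Set V, #S < κ → (G.induce (Sᶜ : Set V)).Connected

def ContainsSubdivisionOfComplete {V : Type u} (G : SimpleGraph V) (κ : Cardinal.{u}) : Prop :=
  ∃ (ι : Type u) (v : ι → V), #ι = κ ∧ Function.Injective v ∧
    ∃ p : ∀ i j : ι, G.Walk (v i) (v j),
      (∀ i j, i ≠ j → (p i j).IsPath) ∧
      (∀ i j k l, i ≠ j → k ≠ l → (i, j) ≠ (k, l) → (i, j) ≠ (l, k) →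
        ∀ x, x ∈ (p i j).support → x ∈ (p k l).support → x ∈ Set.range v) ∧
      (∀ i j k, i ≠ j → v k ∈ (p i j).support → k = i ∨ k = j)

def IsTGraph {T : Type u} [PartialOrder T] (G : SimpleGraph T) : Prop :=
  (∀ ⦃s t⦄, G.Adj s t → s < t ∨ t < s) ∧
  (∀ t s : T, s < t → ∃ r, s ≤ r ∧ r < t ∧ G.Adj r t)


section StarHelpers
open Ordinal

variable {κ : Cardinal.{u}}


abbrev StarV (κ : Cardinal.{u}) : Type u := Option (κ.ord.ToType × κ.ord.ToType)

def StarG (κ : Cardinal.{u}) : SimpleGraph (StarV κ) where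
  Adj x y := x ≠ y ∧ (x = none ∨ y = none ∨
    ∃ a b b', x = some (a, b) ∧ y = some (a, b') ∧ b < a ∧ b' < a)
  symm := by
    refine ⟨?_⟩
    rintro x y ⟨hne, h⟩
    refine ⟨hne.symm, ?_⟩
    rcases h with h | h | ⟨a, b, b', hx, hy, hb, hb'⟩
    · exact Or.inr (Or.inl h)
    · exact Or.inl h
    · exact Or.inr (Or.inr ⟨a, b', b, hy, hx, hb', hb⟩)
  loopless := ⟨fun x h => h.1 rfl⟩

lemma starG_adj_some {p q : κ.ord.ToType × κ.ord.ToType}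
    (h : (StarG κ).Adj (some p) (some q)) :
    p ≠ q ∧ p.1 = q.1 ∧ p.2 < p.1 ∧ q.2 < q.1 := by
  obtain ⟨hne, h | h | ⟨a, b, b', hx, hy, hb, hb'⟩⟩ := h
  · exact absurd h (by simp)
  · exact absurd h (by simp)
  · obtain ⟨rfl, rfl⟩ : p.1 = a ∧ p.2 = b := by simp_all
    have hq : q.1 = p.1 ∧ q.2 = b' := by simp_all
    exact ⟨fun hpq => hne (by rw [hpq]), hq.1.symm, hb, by rw [hq.1, hq.2]; exact hb'⟩

lemma starG_adj_clique {a b b' : κ.ord.ToType} (hb : b < a) (hb' : b' < a) (hne : b ≠ b') :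
    (StarG κ).Adj (some (a, b)) (some (a, b')) :=
  ⟨by simp [hne], Or.inr (Or.inr ⟨a, b, b', rfl, rfl, hb, hb'⟩)⟩

lemma starG_adj_none (p : κ.ord.ToType × κ.ord.ToType) :
    (StarG κ).Adj none (some p) := ⟨by simp, Or.inl rfl⟩

lemma starG_walk_same {S : Set (StarV κ)} (hS : none ∉ S) :
    ∀ {x y : ↥S} (_ : ((StarG κ).induce S).Walk x y) {a b : κ.ord.ToType},
      x.val = some (a, b) → b < a → ∃ b', y.val = some (a, b') ∧ b' < a := by
  intro x y w
  induction w with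
  | nil => exact fun hx hb => ⟨_, hx, hb⟩
  | @cons x z y h w ih =>
    intro a b hx hb
    have hadj : (StarG κ).Adj x.val z.val := h
    rw [hx] at hadj
    obtain ⟨q, hq⟩ : ∃ q, z.val = some q :=
      Option.ne_none_iff_exists'.1 (fun hz => hS (hz ▸ z.2))
    rw [hq] at hadj
    obtain ⟨-, h1, -, h3⟩ := starG_adj_some hadj
    have h1' : a = q.1 := h1
    exact ih (a := a) (b := q.2)
      (by rw [hq]; exact congrArg some (by rw [h1']))
      (lt_of_lt_of_eq h3 h1'.symm)

lemma starV_card (hκ : ℵ₀ ≤ κ) : #(StarV κ) = κ := by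
  have h1 : #(κ.ord.ToType × κ.ord.ToType) = κ := by
    rw [Cardinal.mk_prod, Cardinal.mk_toType, card_ord, Cardinal.lift_id,
      Cardinal.mul_eq_self hκ]
  rw [StarV, Cardinal.mk_option, h1, Cardinal.add_one_eq hκ]

lemma starG_connected : (StarG κ).Connected := by
  have hne : Nonempty (StarV κ) := ⟨none⟩
  have reach : ∀ x : StarV κ, (StarG κ).Reachable none x := by
    rintro (_ | p)
    · exact SimpleGraph.Reachable.refl _
    · exact (starG_adj_none p).reachable
  exact ⟨fun x y => (reach x).symm.trans (reach y)⟩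

lemma exists_Iio_card {μ : Cardinal.{u}} (hμ : μ < κ) :
    ∃ a : κ.ord.ToType, #(Set.Iio a) = μ := by
  haveI hwo : IsWellOrder κ.ord.ToType (· < ·) := isWellOrder_lt
  have h1 : μ.ord < Ordinal.type (α := κ.ord.ToType) (· < ·) := by
    rw [Ordinal.type_toType]; exact Cardinal.ord_lt_ord.2 hμ
  refine ⟨Ordinal.enum (· < ·) ⟨μ.ord, h1⟩, ?_⟩
  have h2 : #(Set.Iio (Ordinal.enum (· < ·) ⟨μ.ord, h1⟩)) =
      #{y // y < Ordinal.enum (· < ·) ⟨μ.ord, h1⟩} := rfl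
  rw [h2, ← Ordinal.card_typein, Ordinal.typein_enum, Cardinal.card_ord]

lemma mk_Iio_lt (a : κ.ord.ToType) : #(Set.Iio a) < κ := Cardinal.mk_Iio_ord_toType a


lemma clique_of_conn {U : Set (StarV κ)} (hU : ((StarG κ).induce U).Connected)
    {x : StarV κ} (hx : x ∈ U) {a b : κ.ord.ToType} (hxab : x = some (a, b)) (hb : b < a)
    (hnone : none ∉ U) : ∀ z ∈ U, ∃ b', z = some (a, b') ∧ b' < a := by
  intro z hz
  obtain ⟨w⟩ := hU.preconnected ⟨x, hx⟩ ⟨z, hz⟩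
  exact starG_walk_same hnone w hxab hb

end StarHelpers

/-- For every limit cardinal κ there is a connected graph of size κ
with chromatic number κ and no K_κ minor. -/
theorem stmt0 (κ : Cardinal.{u}) (hκ : ℵ₀ ≤ κ)
    (hlim : ∀ μ : Cardinal.{u}, μ < κ → Order.succ μ < κ) :
    ∃ (V : Type u) (G : SimpleGraph V), G.Connected ∧ #V = κ ∧
      ChromaticEq G κ ∧ ¬ HasCompleteMinor G κ := by
  classical
  refine ⟨StarV κ, StarG κ, starG_connected, starV_card hκ,
    ⟨⟨StarV κ, id, le_of_eq (starV_card hκ), fun x y h => h.1⟩, ?_⟩, ?_⟩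
  · -- chromatic number lower bound
    rintro ν hν ⟨β, c, hβ, hc⟩
    obtain ⟨a, ha⟩ := exists_Iio_card (κ := κ) (hlim ν hν)
    have hinj : Function.Injective (fun b : ↥(Set.Iio a) => c (some (a, b.val))) := by
      intro b b' h
      by_contra hne
      have hbb : b.val ≠ b'.val := fun h2 => hne (Subtype.ext h2)
      exact hc (starG_adj_clique b.2 b'.2 hbb) h
    have hle : Order.succ ν ≤ ν := by
      calc Order.succ ν = #(Set.Iio a) := ha.symm
        _ ≤ #β := Cardinal.mk_le_of_injective hinj
        _ ≤ ν := hβ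
    exact (Order.lt_succ ν).not_ge hle
  · -- no K_κ minor
    rintro ⟨ι, U, hι, hneU, hdisj, hconn, hadj⟩
    set J : Set ι := {i | none ∉ U i} with hJdef
    have hJc : (Jᶜ : Set ι).Subsingleton := by
      intro i hi j hj
      by_contra hij
      have hi' : none ∈ U i := not_not.1 hi
      have hj' : none ∈ U j := not_not.1 hj
      exact Set.disjoint_left.1 (hdisj i j hij) hi' hj'
    have hcard : #↥J + #↥(Jᶜ : Set ι) = κ := by rw [Cardinal.mk_sum_compl, hι]
    have hJlt : ¬ (#↥J < κ) := by
      intro h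
      have h1 : #↥(Jᶜ : Set ι) ≤ 1 := Cardinal.mk_le_one_iff_set_subsingleton.2 hJc
      have h2 : κ ≤ #↥J + 1 := by rw [← hcard]; exact add_le_add_right h1 _
      have h3 : #↥J + 1 < κ :=
        Cardinal.add_lt_of_lt hκ h (lt_of_lt_of_le Cardinal.one_lt_aleph0 hκ)
      exact absurd (lt_of_le_of_lt h2 h3) (lt_irrefl κ)
    have key : ∀ i ∈ J, ∀ j ∈ J, i ≠ j →
        ∃ a, ∀ z ∈ U i, ∃ b, z = some (a, b) ∧ b < a := by
      intro i hi j hj hij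
      obtain ⟨x, hxU, y, hyU, hxy⟩ := hadj i j hij
      obtain ⟨p, rfl⟩ : ∃ p, x = some p :=
        Option.ne_none_iff_exists'.1 (fun h => hi (h ▸ hxU))
      obtain ⟨q, rfl⟩ : ∃ q, y = some q :=
        Option.ne_none_iff_exists'.1 (fun h => hj (h ▸ hyU))
      obtain ⟨-, -, hp, -⟩ := starG_adj_some hxy
      exact ⟨p.1, fun z hz =>
        clique_of_conn (hconn i) hxU (congrArg some Prod.mk.eta.symm) hp hi z hz⟩
    by_cases hJ2 : ∃ i ∈ J, ∃ j ∈ J, i ≠ j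
    · obtain ⟨i1, hi1, i2, hi2, h12⟩ := hJ2
      have key' : ∀ i ∈ J, ∃ a, ∀ z ∈ U i, ∃ b, z = some (a, b) ∧ b < a := by
        intro i hi
        rcases eq_or_ne i i2 with rfl | hne'
        · exact key i hi i1 hi1 (Ne.symm h12)
        · exact key i hi i2 hi2 hne'
      choose A hA using key'
      have hAeq : ∀ i (hi : i ∈ J) j (hj : j ∈ J), A i hi = A j hj := by
        intro i hi j hj
        rcases eq_or_ne i j with rfl | hij
        · rfl
        · obtain ⟨x, hxU, y, hyU, hxy⟩ := hadj i j hij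
          obtain ⟨b, hxv, hb⟩ := hA i hi x hxU
          obtain ⟨b', hyv, hb'⟩ := hA j hj y hyU
          rw [hxv, hyv] at hxy
          exact (starG_adj_some hxy).2.1
      have hpt : ∀ i : ↥J, ∃ b, b < A i1 hi1 ∧ some (A i1 hi1, b) ∈ U i := by
        rintro ⟨i, hi⟩
        obtain ⟨x, hx⟩ := hneU i
        obtain ⟨b, hxv, hb⟩ := hA i hi x hx
        rw [hAeq i hi i1 hi1] at hxv hb
        exact ⟨b, hb, hxv ▸ hx⟩
      choose f hf1 hf2 using hpt
      have finj : Function.Injective f := by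
        intro i j h
        by_contra hij
        have hij' : (i : ι) ≠ (j : ι) := fun hh => hij (Subtype.ext hh)
        exact Set.disjoint_left.1 (hdisj i j hij') (hf2 i) (h ▸ hf2 j)
      refine hJlt (lt_of_le_of_lt ?_ (mk_Iio_lt (A i1 hi1)))
      exact Cardinal.mk_le_of_injective
        (f := fun i : ↥J => (⟨f i, hf1 i⟩ : ↥(Set.Iio (A i1 hi1))))
        (fun i j h => finj (congrArg Subtype.val h))
    · push_neg at hJ2
      have hsub : J.Subsingleton := fun i hi j hj => hJ2 i hi j hj
      exact hJlt (lt_of_le_of_lt (Cardinal.mk_le_one_iff_set_subsingleton.2 hsub)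
        (lt_of_lt_of_le Cardinal.one_lt_aleph0 hκ))
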